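/- For every m ≥ 1, the complete bipartite graph K_{m, m+1} is stepwise irregular, and for odd n ≥ 3 the graph K_{(n−1)/2, (n+1)/2} is a connected stepwise irregular graph on n vertices with exactly (n² − 1)/4 edges. -/
import Mathlib


open SimpleGraph

noncomputable def deg {V : Type*} (G : SimpleGraph V) (v : V) : ℕ := (G.neighborSet v).ncard

/-- A graph is stepwise irregular if for every edge the endpoint degrees differ by exactly 1. -/
def SI {V : Type*} (G : SimpleGraph V) : Prop :=
  ∀ u v, G.Adj u v → |(deg G u : ℤ) - (deg G v : ℤ)| = 1

lemma nsL (A B : Type*) (a : A) :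
    (completeBipartiteGraph A B).neighborSet (Sum.inl a) = Set.range Sum.inr := by
  ext v; cases v <;> simp [completeBipartiteGraph]

lemma nsR (A B : Type*) (b : B) :
    (completeBipartiteGraph A B).neighborSet (Sum.inr b) = Set.range Sum.inl := by
  ext v; cases v <;> simp [completeBipartiteGraph]

lemma degL (a b : ℕ) (x : Fin a) :
    deg (completeBipartiteGraph (Fin a) (Fin b)) (Sum.inl x) = b := by
  rw [deg, nsL, Set.ncard_eq_toFinset_card']
  simp [Finset.card_image_of_injective _ Sum.inr_injective]

lemma degR (a b : ℕ) (x : Fin b) :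
    deg (completeBipartiteGraph (Fin a) (Fin b)) (Sum.inr x) = a := by
  rw [deg, nsR, Set.ncard_eq_toFinset_card']
  simp [Finset.card_image_of_injective _ Sum.inl_injective]

lemma SI_cb (a b : ℕ) (h : b = a + 1) :
    SI (completeBipartiteGraph (Fin a) (Fin b)) := by
  intro u v huv
  cases u with
  | inl x =>
    cases v with
    | inl y => simp [completeBipartiteGraph] at huv
    | inr y => rw [degL, degR]; simp [h]
  | inr x =>
    cases v with
    | inl y => rw [degR, degL]; simp [h]
    | inr y => simp [completeBipartiteGraph] at huv

lemma conn_cb (a b : ℕ) (ha : 1 ≤ a) (hb : 1 ≤ b) :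
    (completeBipartiteGraph (Fin a) (Fin b)).Connected := by
  rw [connected_iff]
  constructor
  · intro u v
    have adjlr : ∀ (x : Fin a) (y : Fin b),
        (completeBipartiteGraph (Fin a) (Fin b)).Adj (Sum.inl x) (Sum.inr y) := by
      intro x y; simp [completeBipartiteGraph]
    cases u with
    | inl x =>
      cases v with
      | inl y =>
        exact (adjlr x ⟨0, hb⟩).reachable.trans ((adjlr y ⟨0, hb⟩).reachable.symm)
      | inr y => exact (adjlr x y).reachable
    | inr x =>
      cases v with
      | inl y => exact (adjlr y x).reachable.symm
      | inr y =>
        exact ((adjlr ⟨0, ha⟩ x).reachable.symm).trans (adjlr ⟨0, ha⟩ y).reachable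
  · exact ⟨Sum.inl ⟨0, ha⟩⟩

lemma deg_eq_degree (a b : ℕ) (v : Fin a ⊕ Fin b) [DecidableRel (completeBipartiteGraph (Fin a) (Fin b)).Adj] :
    deg (completeBipartiteGraph (Fin a) (Fin b)) v
      = (completeBipartiteGraph (Fin a) (Fin b)).degree v := by
  rw [deg, ← SimpleGraph.card_neighborSet_eq_degree, Set.ncard_eq_toFinset_card',
    Set.toFinset_card]

lemma edges_cb (a b : ℕ) :
    (completeBipartiteGraph (Fin a) (Fin b)).edgeSet.ncard = a * b := by
  classical
  have hsum := (completeBipartiteGraph (Fin a) (Fin b)).sum_degrees_eq_twice_card_edges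
  rw [Fintype.sum_sum_type] at hsum
  have h1 : ∀ x : Fin a, (completeBipartiteGraph (Fin a) (Fin b)).degree (Sum.inl x) = b := by
    intro x; rw [← deg_eq_degree, degL]
  have h2 : ∀ x : Fin b, (completeBipartiteGraph (Fin a) (Fin b)).degree (Sum.inr x) = a := by
    intro x; rw [← deg_eq_degree, degR]
  simp only [h1, h2, Finset.sum_const, Finset.card_univ, Fintype.card_fin, smul_eq_mul] at hsum
  have hE : (completeBipartiteGraph (Fin a) (Fin b)).edgeSet.ncard
      = (completeBipartiteGraph (Fin a) (Fin b)).edgeFinset.card := by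
    simp [Set.ncard_eq_toFinset_card', Set.toFinset_card, SimpleGraph.edgeFinset_card]
  rw [hE]
  have hc : b * a = a * b := Nat.mul_comm b a
  omega

theorem stmt_18 :
    (∀ m : ℕ, 1 ≤ m → SI (completeBipartiteGraph (Fin m) (Fin (m + 1)))) ∧
    (∀ n : ℕ, 3 ≤ n → Odd n →
      (completeBipartiteGraph (Fin ((n - 1) / 2)) (Fin ((n + 1) / 2))).Connected ∧
      SI (completeBipartiteGraph (Fin ((n - 1) / 2)) (Fin ((n + 1) / 2))) ∧
      Fintype.card (Fin ((n - 1) / 2) ⊕ Fin ((n + 1) / 2)) = n ∧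
      (completeBipartiteGraph (Fin ((n - 1) / 2)) (Fin ((n + 1) / 2))).edgeSet.ncard
        = (n ^ 2 - 1) / 4) := by
  constructor
  · intro m _; exact SI_cb m (m + 1) rfl
  · intro n hn hodd
    obtain ⟨k, hk⟩ := hodd
    have h1 : (n - 1) / 2 = k := by omega
    have h2 : (n + 1) / 2 = k + 1 := by omega
    rw [h1, h2]
    refine ⟨conn_cb _ _ (by omega) (by omega), SI_cb _ _ rfl, ?_, ?_⟩
    · simp; omega
    · rw [edges_cb]
      have : n ^ 2 = 4 * (k * (k + 1)) + 1 := by subst hk; ring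
      omega
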